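/- Assume additionally that the eigenvalues are sorted, λ_1 ≥ λ_2 ≥ … ≥ λ_N, and that 1 ≤ k < N. Let T* ⊆ {1,…,N} with |T*| = k satisfy α|λ_j|/(1 − αλ_j) ≥ α|λ_i|/(1 − αλ_i) for every j ∈ T* and every i ∉ T*, and let A_k = Σ_{i=1}^{k} (1/(1 − αλ_i)) q_i q_iᵀ be the truncation of A that keeps its k largest eigenvalues (the best rank-k approximation of A). Then ‖Â_{T*} − A‖₂ < ‖A_k − A‖₂ and ‖Â_{T*} − A‖_F < ‖A_k − A‖_F. -/

import Mathlib

open Matrix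

/-- The ℓ2 operator norm (spectral norm) of a real matrix: its operator norm as a linear map
between Euclidean spaces equipped with the ℓ2 norm. -/
noncomputable def l2OpNorm {N : ℕ} (M : Matrix (Fin N) (Fin N) ℝ) : ℝ :=
  ‖LinearMap.toContinuousLinearMap (Matrix.toEuclideanLin M)‖

/-- The Frobenius norm of a real matrix, `‖M‖_F = sqrt(∑_{a,b} M_{a,b}²)`. -/
noncomputable def frobNorm {N : ℕ} (M : Matrix (Fin N) (Fin N) ℝ) : ℝ :=
  Real.sqrt (∑ a, ∑ b, (M a b) ^ 2)

section Aux

variable {N : ℕ} (Q : Matrix (Fin N) (Fin N) ℝ)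

lemma sum_sq_eq (h : ∀ i j, ∑ a, Q a i * Q a j = if i = j then (1:ℝ) else 0)
    (u : Fin N → ℝ) : ∑ a, (∑ i, Q a i * u i) ^ 2 = ∑ i, u i ^ 2 := by
  calc ∑ a, (∑ i, Q a i * u i) ^ 2
      = ∑ a, ∑ i, ∑ j, (Q a i * u i) * (Q a j * u j) :=
        Finset.sum_congr rfl fun a _ => by rw [sq, Finset.sum_mul_sum]
    _ = ∑ i, ∑ j, ∑ a, (Q a i * u i) * (Q a j * u j) := by
        rw [Finset.sum_comm]
        exact Finset.sum_congr rfl fun i _ => Finset.sum_comm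
    _ = ∑ i, ∑ j, (u i * u j) * ∑ a, Q a i * Q a j := by
        refine Finset.sum_congr rfl fun i _ => Finset.sum_congr rfl fun j _ => ?_
        rw [Finset.mul_sum]
        exact Finset.sum_congr rfl fun a _ => by ring
    _ = ∑ i, u i ^ 2 := by
        simp_rw [h, mul_ite, mul_one, mul_zero, Finset.sum_ite_eq, Finset.mem_univ, if_true]
        exact Finset.sum_congr rfl fun i _ => by ring

lemma conj_apply (d : Fin N → ℝ) (a b : Fin N) :
    (Q * diagonal d * Qᵀ) a b = ∑ i, Q a i * d i * Q b i := by
  rw [Matrix.mul_apply]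
  exact Finset.sum_congr rfl fun i _ => by rw [Matrix.mul_diagonal, Matrix.transpose_apply]

lemma conj_sub (d e : Fin N → ℝ) :
    Q * diagonal d * Qᵀ - Q * diagonal e * Qᵀ = Q * diagonal (fun i => d i - e i) * Qᵀ := by
  ext a b
  rw [Matrix.sub_apply, conj_apply, conj_apply, conj_apply, ← Finset.sum_sub_distrib]
  exact Finset.sum_congr rfl fun i _ => by ring

lemma conj_smul (c : ℝ) (d : Fin N → ℝ) :
    c • (Q * diagonal d * Qᵀ) = Q * diagonal (fun i => c * d i) * Qᵀ := by
  ext a b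
  rw [Matrix.smul_apply, conj_apply, conj_apply, smul_eq_mul, Finset.mul_sum]
  exact Finset.sum_congr rfl fun i _ => by ring

lemma conj_one (hQ₂ : Q * Qᵀ = 1) : (1 : Matrix (Fin N) (Fin N) ℝ) = Q * diagonal (fun _ => 1) * Qᵀ := by
  have : diagonal (fun _ : Fin N => (1:ℝ)) = 1 := Matrix.diagonal_one
  rw [this, Matrix.mul_one, hQ₂]

lemma myconj_mul (hQ₁ : Qᵀ * Q = 1) (d e : Fin N → ℝ) :
    (Q * diagonal d * Qᵀ) * (Q * diagonal e * Qᵀ) = Q * diagonal (fun i => d i * e i) * Qᵀ := by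
  rw [← Matrix.diagonal_mul_diagonal]
  simp only [Matrix.mul_assoc]
  rw [← Matrix.mul_assoc Qᵀ Q, hQ₁, Matrix.one_mul]

lemma myconj_inv (hQ₁ : Qᵀ * Q = 1) (hQ₂ : Q * Qᵀ = 1) (d : Fin N → ℝ) (hd : ∀ i, d i ≠ 0) :
    (Q * diagonal d * Qᵀ)⁻¹ = Q * diagonal (fun i => (d i)⁻¹) * Qᵀ := by
  apply Matrix.inv_eq_right_inv
  rw [myconj_mul Q hQ₁]
  rw [conj_one Q hQ₂]
  have : (fun i => d i * (d i)⁻¹) = fun _ : Fin N => (1:ℝ) := funext fun i => mul_inv_cancel₀ (hd i)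
  rw [this]

lemma conj_sum (t : Finset (Fin N)) (c : Fin N → ℝ) :
    ∑ j ∈ t, c j • Matrix.vecMulVec (fun a => Q a j) (fun a => Q a j)
      = Q * diagonal (fun i => if i ∈ t then c i else 0) * Qᵀ := by
  ext a b
  rw [Matrix.sum_apply, conj_apply]
  simp only [Matrix.smul_apply, Matrix.vecMulVec_apply, smul_eq_mul]
  rw [show (∑ i, Q a i * (if i ∈ t then c i else 0) * Q b i)
      = ∑ i, (if i ∈ t then c i * (Q a i * Q b i) else 0) from
    Finset.sum_congr rfl fun i _ => by split_ifs <;> ring]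
  rw [Finset.sum_ite_mem, Finset.univ_inter]

lemma col_orth (hQ₁ : Qᵀ * Q = 1) (i j : Fin N) :
    ∑ a, Q a i * Q a j = if i = j then (1:ℝ) else 0 := by
  have := congrFun (congrFun hQ₁ i) j
  rw [Matrix.mul_apply, Matrix.one_apply] at this
  simpa [Matrix.transpose_apply] using this

lemma row_orth (hQ₂ : Q * Qᵀ = 1) (i j : Fin N) :
    ∑ a, Q i a * Q j a = if i = j then (1:ℝ) else 0 := by
  have := congrFun (congrFun hQ₂ i) j
  rw [Matrix.mul_apply, Matrix.one_apply] at this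
  simpa [Matrix.transpose_apply] using this

lemma frob_conj (hQ₁ : Qᵀ * Q = 1) (d : Fin N → ℝ) :
    frobNorm (Q * diagonal d * Qᵀ) = Real.sqrt (∑ i, d i ^ 2) := by
  unfold frobNorm
  congr 1
  calc ∑ a, ∑ b, ((Q * diagonal d * Qᵀ) a b) ^ 2
      = ∑ b, ∑ a, (∑ i, Q a i * (d i * Q b i)) ^ 2 := by
        rw [Finset.sum_comm]
        exact Finset.sum_congr rfl fun b _ => Finset.sum_congr rfl fun a _ => by
          rw [conj_apply]; congr 1; exact Finset.sum_congr rfl fun i _ => by ring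
    _ = ∑ b, ∑ i, (d i * Q b i) ^ 2 :=
        Finset.sum_congr rfl fun b _ => sum_sq_eq Q (col_orth Q hQ₁) _
    _ = ∑ i, d i ^ 2 * ∑ b, Q b i * Q b i := by
        rw [Finset.sum_comm]
        exact Finset.sum_congr rfl fun i _ => by rw [Finset.mul_sum]; exact Finset.sum_congr rfl fun b _ => by ring
    _ = ∑ i, d i ^ 2 := by
        refine Finset.sum_congr rfl fun i _ => ?_
        rw [col_orth Q hQ₁ i i, if_pos rfl, mul_one]

end Aux

section Aux2
variable {N : ℕ} (Q : Matrix (Fin N) (Fin N) ℝ)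
lemma euclid_norm_eq (y : EuclideanSpace ℝ (Fin N)) : ‖y‖ = Real.sqrt (∑ a, (y a)^2) := by
  rw [EuclideanSpace.norm_eq]
  simp [Real.norm_eq_abs, sq_abs]

lemma l2OpNorm_conj_le (hQ₁ : Qᵀ * Q = 1) (hQ₂ : Q * Qᵀ = 1) (d : Fin N → ℝ)
    (c : ℝ) (hc : 0 ≤ c) (hd : ∀ i, |d i| ≤ c) :
    l2OpNorm (Q * diagonal d * Qᵀ) ≤ c := by
  unfold l2OpNorm
  refine ContinuousLinearMap.opNorm_le_bound _ hc fun x => ?_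
  set M := Q * diagonal d * Qᵀ with hM
  set v : Fin N → ℝ := WithLp.equiv 2 (Fin N → ℝ) x with hv
  have happ : (LinearMap.toContinuousLinearMap (Matrix.toEuclideanLin M)) x
      = (WithLp.equiv 2 (Fin N → ℝ)).symm (M *ᵥ v) := rfl
  set y : Fin N → ℝ := fun i => ∑ b, Q b i * v b with hy
  have hMv : ∀ a, (M *ᵥ v) a = ∑ i, Q a i * (d i * y i) := by
    intro a
    calc (M *ᵥ v) a = ∑ b, M a b * v b := by simp [Matrix.mulVec, dotProduct]
      _ = ∑ b, ∑ i, Q a i * d i * Q b i * v b := by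
          refine Finset.sum_congr rfl fun b _ => ?_
          rw [hM, conj_apply Q d a b, Finset.sum_mul]
      _ = ∑ i, ∑ b, Q a i * d i * Q b i * v b := Finset.sum_comm
      _ = ∑ i, Q a i * (d i * y i) := by
          refine Finset.sum_congr rfl fun i _ => ?_
          rw [hy]; dsimp only; rw [Finset.mul_sum, Finset.mul_sum]
          exact Finset.sum_congr rfl fun b _ => by ring
  have hnormx : ‖x‖ = Real.sqrt (∑ b, (v b)^2) := euclid_norm_eq _
  have key : ∑ a, ((M *ᵥ v) a)^2 ≤ c^2 * ∑ b, (v b)^2 := by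
    have e1 : ∑ a, ((M *ᵥ v) a)^2 = ∑ i, (d i * y i)^2 := by
      rw [show (∑ a, ((M *ᵥ v) a)^2) = ∑ a, (∑ i, Q a i * (d i * y i))^2 from
        Finset.sum_congr rfl fun a _ => by rw [hMv a]]
      exact sum_sq_eq Q (col_orth Q hQ₁) _
    have e2 : ∑ i, (y i)^2 = ∑ b, (v b)^2 := by
      have := sum_sq_eq Qᵀ (fun i j => by simpa [Matrix.transpose_apply] using row_orth Q hQ₂ i j) v
      simpa [Matrix.transpose_apply] using this
    rw [e1, ← e2, Finset.mul_sum]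
    refine Finset.sum_le_sum fun i _ => ?_
    have h1 : (d i)^2 ≤ c^2 := by
      rw [← sq_abs (d i)]
      exact pow_le_pow_left₀ (abs_nonneg _) (hd i) 2
    calc (d i * y i)^2 = (d i)^2 * (y i)^2 := by ring
      _ ≤ c^2 * (y i)^2 := mul_le_mul_of_nonneg_right h1 (sq_nonneg _)
  rw [happ, hnormx]
  rw [euclid_norm_eq]
  have : ∀ a, (((WithLp.equiv 2 (Fin N → ℝ)).symm (M *ᵥ v)) a) = (M *ᵥ v) a := fun _ => rfl
  simp_rw [this]
  rw [show c * Real.sqrt (∑ b, (v b)^2) = Real.sqrt (c^2 * ∑ b, (v b)^2) by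
    rw [Real.sqrt_mul (sq_nonneg c), Real.sqrt_sq hc]]
  exact Real.sqrt_le_sqrt key

lemma l2OpNorm_conj_ge (hQ₁ : Qᵀ * Q = 1) (d : Fin N → ℝ) (i₀ : Fin N) :
    |d i₀| ≤ l2OpNorm (Q * diagonal d * Qᵀ) := by
  set M := Q * diagonal d * Qᵀ with hM
  set x : EuclideanSpace ℝ (Fin N) := (WithLp.equiv 2 (Fin N → ℝ)).symm (fun a => Q a i₀) with hx
  have hxnorm : ‖x‖ = 1 := by
    rw [euclid_norm_eq]
    rw [show (∑ a, (x a)^2) = ∑ a, Q a i₀ * Q a i₀ from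
      Finset.sum_congr rfl fun a _ => by rw [hx]; simp [sq]]
    rw [col_orth Q hQ₁ i₀ i₀, if_pos rfl, Real.sqrt_one]
  have hMx : ∀ a, (M *ᵥ (fun a => Q a i₀)) a = d i₀ * Q a i₀ := by
    intro a
    calc (M *ᵥ (fun b => Q b i₀)) a = ∑ b, M a b * Q b i₀ := by
          simp [Matrix.mulVec, dotProduct]
      _ = ∑ i, ∑ b, Q a i * d i * Q b i * Q b i₀ := by
          rw [show (∑ b, M a b * Q b i₀) = ∑ b, ∑ i, Q a i * d i * Q b i * Q b i₀ from
            Finset.sum_congr rfl fun b _ => by rw [hM, conj_apply Q d a b, Finset.sum_mul]]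
          exact Finset.sum_comm
      _ = ∑ i, Q a i * d i * (if i = i₀ then (1:ℝ) else 0) := by
          refine Finset.sum_congr rfl fun i _ => ?_
          rw [← col_orth Q hQ₁ i i₀, Finset.mul_sum]
          exact Finset.sum_congr rfl fun b _ => by ring
      _ = d i₀ * Q a i₀ := by
          simp [mul_ite, Finset.sum_ite_eq, mul_comm]
  have happ : (LinearMap.toContinuousLinearMap (Matrix.toEuclideanLin M)) x
      = (WithLp.equiv 2 (Fin N → ℝ)).symm (M *ᵥ (fun a => Q a i₀)) := rfl
  have hnorm : ‖(LinearMap.toContinuousLinearMap (Matrix.toEuclideanLin M)) x‖ = |d i₀| := by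
    rw [happ, euclid_norm_eq]
    have : ∀ a, (((WithLp.equiv 2 (Fin N → ℝ)).symm (M *ᵥ fun a => Q a i₀)) a)
        = d i₀ * Q a i₀ := fun a => hMx a
    simp_rw [this]
    rw [show (∑ a, (d i₀ * Q a i₀)^2) = (d i₀)^2 * ∑ a, Q a i₀ * Q a i₀ by
      rw [Finset.mul_sum]; exact Finset.sum_congr rfl fun a _ => by ring]
    rw [col_orth Q hQ₁ i₀ i₀, if_pos rfl, mul_one, Real.sqrt_sq_eq_abs]
  calc |d i₀| = ‖(LinearMap.toContinuousLinearMap (Matrix.toEuclideanLin M)) x‖ := hnorm.symm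
    _ ≤ l2OpNorm M * ‖x‖ := ContinuousLinearMap.le_opNorm _ _
    _ = l2OpNorm M := by rw [hxnorm, mul_one]
end Aux2

/-- **The selected low-rank transformation beats the best rank-`k` approximation of `A`.**
With `S = Q Λ Qᵀ` a spectral decomposition of the real symmetric matrix `S` (eigenvalues in
`[-1,1]` and sorted decreasingly), `α ∈ (0,1)`, `1 ≤ k < N`, let `T*` of size `k` satisfy
`α|λ_j|/(1-αλ_j) ≥ α|λ_i|/(1-αλ_i)` for all `j ∈ T*`, `i ∉ T*`, and let
`A_k = ∑_{i=1}^{k} (1/(1-αλ_i)) q_i q_iᵀ` be the truncation of `A = (I - αS)⁻¹` keeping its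
`k` largest eigenvalues. Then `‖Â_{T*} - A‖₂ < ‖A_k - A‖₂` and `‖Â_{T*} - A‖_F < ‖A_k - A‖_F`,
where `Â_{T*} = (I - αS_{T*})⁻¹` and `S_{T*} = ∑_{j ∈ T*} λ_j q_j q_jᵀ`. -/
theorem stmt9 (N k : ℕ) (hk₁ : 1 ≤ k) (hkN : k < N) (α : ℝ) (hα : α ∈ Set.Ioo (0 : ℝ) 1)
    (Q : Matrix (Fin N) (Fin N) ℝ) (hQ₁ : Qᵀ * Q = 1) (hQ₂ : Q * Qᵀ = 1)
    (lam : Fin N → ℝ) (hlam : ∀ i, lam i ∈ Set.Icc (-1 : ℝ) 1)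
    (hsort : ∀ i j : Fin N, i ≤ j → lam j ≤ lam i)
    (S : Matrix (Fin N) (Fin N) ℝ) (hS : S = Q * Matrix.diagonal lam * Qᵀ)
    (Tstar : Finset (Fin N)) (hTcard : Tstar.card = k)
    (hopt : ∀ j ∈ Tstar, ∀ i ∉ Tstar,
      α * |lam i| / (1 - α * lam i) ≤ α * |lam j| / (1 - α * lam j))
    (ST : Matrix (Fin N) (Fin N) ℝ)
    (hST : ST = ∑ j ∈ Tstar, lam j • Matrix.vecMulVec (fun a => Q a j) (fun a => Q a j))
    (A Ahat Ak : Matrix (Fin N) (Fin N) ℝ)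
    (hA : A = (1 - α • S)⁻¹) (hAhat : Ahat = (1 - α • ST)⁻¹)
    (hAk : Ak = ∑ i ∈ Finset.univ.filter (fun i : Fin N => (i : ℕ) < k),
      (1 / (1 - α * lam i)) • Matrix.vecMulVec (fun a => Q a i) (fun a => Q a i)) :
    l2OpNorm (Ahat - A) < l2OpNorm (Ak - A) ∧
      frobNorm (Ahat - A) < frobNorm (Ak - A) := by
  obtain ⟨hα0, hα1⟩ := hα
  -- basic positivity
  have habs1 : ∀ i, |lam i| ≤ 1 := fun i => abs_le.mpr ⟨(hlam i).1, (hlam i).2⟩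
  have hpos : ∀ i, 0 < 1 - α * lam i := by
    intro i
    have h1 : α * lam i ≤ α * |lam i| := mul_le_mul_of_nonneg_left (le_abs_self _) hα0.le
    have h2 : α * |lam i| ≤ α * 1 := mul_le_mul_of_nonneg_left (habs1 i) hα0.le
    linarith
  have hne : ∀ i, (1 - α * lam i) ≠ 0 := fun i => (hpos i).ne'
  set f : Fin N → ℝ := fun i => α * |lam i| / (1 - α * lam i) with hf
  set g : Fin N → ℝ := fun i => (1 - α * lam i)⁻¹ with hg
  have hgpos : ∀ i, 0 < g i := fun i => inv_pos.mpr (hpos i)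
  have hfnonneg : ∀ i, 0 ≤ f i := fun i =>
    div_nonneg (mul_nonneg hα0.le (abs_nonneg _)) (hpos i).le
  have hnum : ∀ i, α * |lam i| < 1 := by
    intro i
    have h2 : α * |lam i| ≤ α * 1 := mul_le_mul_of_nonneg_left (habs1 i) hα0.le
    linarith
  have hflt : ∀ i, f i < g i := by
    intro i
    have : g i = 1 / (1 - α * lam i) := (one_div _).symm
    rw [hf, this]
    exact div_lt_div_of_pos_right (hnum i) (hpos i)
  have hgmono : ∀ i j : Fin N, i ≤ j → g j ≤ g i := by
    intro i j hij
    have h1 := hsort i j hij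
    have h2 : 1 - α * lam i ≤ 1 - α * lam j := by
      have := mul_le_mul_of_nonneg_left h1 hα0.le
      linarith
    exact inv_anti₀ (hpos i) h2
  -- conjugation forms
  have h1S : (1 : Matrix (Fin N) (Fin N) ℝ) - α • S
      = Q * diagonal (fun i => 1 - α * lam i) * Qᵀ := by
    calc (1 : Matrix (Fin N) (Fin N) ℝ) - α • S
        = Q * diagonal (fun _ => 1) * Qᵀ - Q * diagonal (fun i => α * lam i) * Qᵀ := by
          rw [hS, conj_smul, ← conj_one Q hQ₂]
      _ = Q * diagonal (fun i => 1 - α * lam i) * Qᵀ := conj_sub Q _ _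
  have hAconj : A = Q * diagonal g * Qᵀ := by
    rw [hA, h1S, myconj_inv Q hQ₁ hQ₂ _ hne]
  have h1ST : (1 : Matrix (Fin N) (Fin N) ℝ) - α • ST
      = Q * diagonal (fun i => 1 - α * (if i ∈ Tstar then lam i else 0)) * Qᵀ := by
    calc (1 : Matrix (Fin N) (Fin N) ℝ) - α • ST
        = Q * diagonal (fun _ => 1) * Qᵀ
            - Q * diagonal (fun i => α * (if i ∈ Tstar then lam i else 0)) * Qᵀ := by
          rw [hST, conj_sum, conj_smul, ← conj_one Q hQ₂]
      _ = _ := conj_sub Q _ _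
  have hdTne : ∀ i, (1 - α * (if i ∈ Tstar then lam i else 0)) ≠ 0 := by
    intro i
    split_ifs with h
    · exact hne i
    · norm_num
  have hAhatconj : Ahat
      = Q * diagonal (fun i => (1 - α * (if i ∈ Tstar then lam i else 0))⁻¹) * Qᵀ := by
    rw [hAhat, h1ST, myconj_inv Q hQ₁ hQ₂ _ hdTne]
  set dhat : Fin N → ℝ :=
    fun i => (1 - α * (if i ∈ Tstar then lam i else 0))⁻¹ - g i with hdhatdef
  have hdiff : Ahat - A = Q * diagonal dhat * Qᵀ := by
    rw [hAhatconj, hAconj]; exact conj_sub Q _ _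
  have hdhat : ∀ i, dhat i = if i ∈ Tstar then 0 else 1 - g i := by
    intro i
    rw [hdhatdef]
    dsimp only
    split_ifs with h
    · rw [hg]; simp
    · norm_num
  have habsdhat : ∀ i ∉ Tstar, |dhat i| = f i := by
    intro i hi
    rw [hdhat i, if_neg hi]
    have hval : 1 - g i = -(α * lam i) / (1 - α * lam i) := by
      rw [hg]
      dsimp only
      rw [eq_div_iff (hne i)]
      field_simp
      linear_combination -(one_div_mul_cancel (hne i))
    rw [hval, abs_div, abs_neg, abs_of_pos (hpos i), abs_mul, abs_of_pos hα0, hf]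
  -- Ak
  set U : Finset (Fin N) := Finset.univ.filter (fun i : Fin N => (i : ℕ) < k) with hUdef
  have hAkconj : Ak = Q * diagonal (fun i => if i ∈ U then g i else 0) * Qᵀ := by
    rw [hAk, conj_sum]
    congr 1
    congr 1
    congr 1
    funext i
    rw [hg]
    simp [one_div]
  set dk : Fin N → ℝ := fun i => (if i ∈ U then g i else 0) - g i with hdkdef
  have hAkdiff : Ak - A = Q * diagonal dk * Qᵀ := by
    rw [hAkconj, hAconj]; exact conj_sub Q _ _
  have hdk : ∀ i, dk i = if i ∈ U then 0 else -(g i) := by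
    intro i
    rw [hdkdef]
    dsimp only
    split_ifs with h <;> ring
  -- the pivotal index
  set ik : Fin N := ⟨k, hkN⟩ with hik
  have hikU : ik ∉ U := by
    rw [hUdef]
    simp [hik]
  have cardU : U.card = k := by
    have hmap : U = Finset.map ⟨Fin.castLE hkN.le, Fin.castLE_injective hkN.le⟩ Finset.univ := by
      ext x
      simp only [hUdef, Finset.mem_filter, Finset.mem_univ, true_and, Finset.mem_map,
        Function.Embedding.coeFn_mk]
      constructor
      · intro hx
        exact ⟨⟨(x : ℕ), hx⟩, by ext; simp⟩
      · rintro ⟨y, rfl⟩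
        exact y.2
    rw [hmap, Finset.card_map, Finset.card_univ, Fintype.card_fin]
  -- the key claim for the spectral bound
  have claim : ∀ i, |dhat i| < g ik := by
    intro i
    by_cases hiT : i ∈ Tstar
    · rw [hdhat i, if_pos hiT, abs_zero]
      exact hgpos ik
    · rw [habsdhat i hiT]
      by_cases hik2 : k ≤ (i : ℕ)
      · have hle : ik ≤ i := by
          rw [Fin.le_def]
          exact hik2
        exact lt_of_lt_of_le (hflt i) (hgmono ik i hle)
      · have hexj : ∃ j ∈ Tstar, ¬((j : ℕ) < k) := by
          by_contra hcon
          push_neg at hcon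
          have hsub : insert i Tstar ⊆ U := by
            intro x hx
            rcases Finset.mem_insert.mp hx with h | h
            · subst h
              rw [hUdef]
              simp only [Finset.mem_filter, Finset.mem_univ, true_and]
              omega
            · rw [hUdef]
              simp only [Finset.mem_filter, Finset.mem_univ, true_and]
              exact hcon x h
          have hcard := Finset.card_le_card hsub
          rw [Finset.card_insert_of_notMem hiT, hTcard, cardU] at hcard
          omega
        obtain ⟨j, hjT, hjk⟩ := hexj
        have hle : ik ≤ j := by
          rw [Fin.le_def]
          exact not_lt.mp hjk
        calc f i ≤ f j := hopt j hjT i hiT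
          _ < g j := hflt j
          _ ≤ g ik := hgmono ik j hle
  -- spectral norm part
  have hne' : (Finset.univ : Finset (Fin N)).Nonempty := ⟨ik, Finset.mem_univ _⟩
  set c : ℝ := Finset.univ.sup' hne' (fun i => |dhat i|) with hc
  have hcle : ∀ i, |dhat i| ≤ c := by
    intro i
    rw [hc]
    exact Finset.le_sup' (fun i => |dhat i|) (Finset.mem_univ i)
  have hc0 : 0 ≤ c := le_trans (abs_nonneg _) (hcle ik)
  have hclt : c < g ik := by
    obtain ⟨i₀, _, hi₀⟩ := Finset.exists_mem_eq_sup' hne' (fun i => |dhat i|)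
    rw [hc, hi₀]
    exact claim i₀
  have hub : l2OpNorm (Ahat - A) ≤ c := by
    rw [hdiff]
    exact l2OpNorm_conj_le Q hQ₁ hQ₂ dhat c hc0 hcle
  have hlb : g ik ≤ l2OpNorm (Ak - A) := by
    rw [hAkdiff]
    have := l2OpNorm_conj_ge Q hQ₁ dk ik
    rwa [hdk ik, if_neg hikU, abs_neg, abs_of_pos (hgpos ik)] at this
  have hspec : l2OpNorm (Ahat - A) < l2OpNorm (Ak - A) :=
    lt_of_le_of_lt hub (lt_of_lt_of_le hclt hlb)
  -- Frobenius part
  have e1 : ∑ i, dhat i ^ 2 = ∑ i ∈ Tstarᶜ, f i ^ 2 := by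
    rw [show (∑ i, dhat i ^ 2) = ∑ i ∈ Tstarᶜ, dhat i ^ 2 from
      (Finset.sum_subset (Finset.subset_univ _) (fun x _ hx => by
        have hxT : x ∈ Tstar := by simpa [Finset.mem_compl] using hx
        rw [hdhat x, if_pos hxT]; ring)).symm]
    refine Finset.sum_congr rfl fun i hi => ?_
    have hiT : i ∉ Tstar := Finset.mem_compl.mp hi
    rw [← sq_abs (dhat i), habsdhat i hiT]
  have e2 : ∑ i, dk i ^ 2 = ∑ i ∈ Uᶜ, g i ^ 2 := by
    rw [show (∑ i, dk i ^ 2) = ∑ i ∈ Uᶜ, dk i ^ 2 from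
      (Finset.sum_subset (Finset.subset_univ _) (fun x _ hx => by
        have hxU : x ∈ U := by simpa [Finset.mem_compl] using hx
        rw [hdk x, if_pos hxU]; ring)).symm]
    refine Finset.sum_congr rfl fun i hi => ?_
    rw [hdk i, if_neg (Finset.mem_compl.mp hi)]
    ring
  -- ∑_U f² ≤ ∑_T f²
  have hcards : (U \ Tstar).card = (Tstar \ U).card := by
    have h1 := Finset.card_sdiff_add_card_inter U Tstar
    have h2 := Finset.card_sdiff_add_card_inter Tstar U
    rw [Finset.inter_comm] at h2
    omega
  have hdiffsum : ∑ i ∈ U \ Tstar, f i ^ 2 ≤ ∑ j ∈ Tstar \ U, f j ^ 2 := by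
    let e := Finset.equivOfCardEq hcards
    calc ∑ i ∈ U \ Tstar, f i ^ 2 = ∑ x : (U \ Tstar : Finset (Fin N)), f x ^ 2 :=
          (Finset.sum_coe_sort _ _).symm
      _ ≤ ∑ x : (U \ Tstar : Finset (Fin N)), f (e x) ^ 2 := by
          refine Finset.sum_le_sum fun x _ => ?_
          have hx : (x : Fin N) ∉ Tstar := (Finset.mem_sdiff.mp x.2).2
          have hex : ((e x : Fin N)) ∈ Tstar := (Finset.mem_sdiff.mp (e x).2).1
          exact pow_le_pow_left₀ (hfnonneg _) (hopt _ hex _ hx) 2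
      _ = ∑ y : (Tstar \ U : Finset (Fin N)), f y ^ 2 :=
          e.sum_comp (fun y : (Tstar \ U : Finset (Fin N)) => f y ^ 2)
      _ = ∑ j ∈ Tstar \ U, f j ^ 2 := Finset.sum_coe_sort (Tstar \ U) (fun j => f j ^ 2)
  have hUT : ∑ i ∈ U, f i ^ 2 ≤ ∑ j ∈ Tstar, f j ^ 2 := by
    have h1 := Finset.sum_inter_add_sum_sdiff U Tstar (fun i => f i ^ 2)
    have h2 := Finset.sum_inter_add_sum_sdiff Tstar U (fun i => f i ^ 2)
    rw [Finset.inter_comm] at h2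
    linarith
  have hcompl : ∑ i ∈ Tstarᶜ, f i ^ 2 ≤ ∑ i ∈ Uᶜ, f i ^ 2 := by
    have h1 := Finset.sum_add_sum_compl Tstar (fun i => f i ^ 2)
    have h2 := Finset.sum_add_sum_compl U (fun i => f i ^ 2)
    linarith
  have hstrict : ∑ i ∈ Uᶜ, f i ^ 2 < ∑ i ∈ Uᶜ, g i ^ 2 := by
    refine Finset.sum_lt_sum_of_nonempty ⟨ik, Finset.mem_compl.mpr hikU⟩ fun i _ => ?_
    exact pow_lt_pow_left₀ (hflt i) (hfnonneg i) two_ne_zero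
  have hfrob : frobNorm (Ahat - A) < frobNorm (Ak - A) := by
    rw [hdiff, hAkdiff, frob_conj Q hQ₁, frob_conj Q hQ₁]
    apply Real.sqrt_lt_sqrt (Finset.sum_nonneg fun i _ => sq_nonneg _)
    rw [e1, e2]
    calc ∑ i ∈ Tstarᶜ, f i ^ 2 ≤ ∑ i ∈ Uᶜ, f i ^ 2 := hcompl
      _ < ∑ i ∈ Uᶜ, g i ^ 2 := hstrict
  exact ⟨hspec, hfrob⟩
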